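/- arXiv:math/0308270 — 7 statements merged into one kernel-verified Lean document; each statement's English description precedes it below -/
import Mathlib

section
/- For any vectors x, y, z in a complex inner product space, the 2-inner product Cauchy–Schwarz inequality holds: |(x,y|z)|² ≤ (x,x|z)·(y,y|z), where (x,y|z) := ⟪x,y⟫‖z‖² − ⟪x,z⟫⟪z,y⟫. -/
open scoped BigOperators

/-- The standard 2-inner product on a complex inner product space:
`(x,y|z) = ⟪x,y⟫‖z‖² − ⟪x,z⟫⟪z,y⟫`. -/
noncomputable def tinner {H : Type*} [NormedAddCommGroup H] [InnerProductSpace ℂ H]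
    (x y z : H) : ℂ :=
  (inner ℂ x y : ℂ) * ((‖z‖ : ℂ) ^ 2) - (inner ℂ x z : ℂ) * (inner ℂ z y : ℂ)

/-- The associated 2-norm `‖x|z‖ = √(x,x|z)`. -/
noncomputable def tnorm {H : Type*} [NormedAddCommGroup H] [InnerProductSpace ℂ H]
    (x z : H) : ℝ :=
  Real.sqrt (tinner x x z).re

theorem tinner_cauchy_schwarz {H : Type*} [NormedAddCommGroup H] [InnerProductSpace ℂ H]
    (x y z : H) :
    ‖tinner x y z‖ ^ 2 ≤ (tinner x x z).re * (tinner y y z).re := by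
  rcases eq_or_ne z 0 with rfl | hz
  · simp [tinner]
  have hz' : (‖z‖ : ℂ) ≠ 0 := by
    simpa using norm_ne_zero_iff.mpr hz
  have hz2 : ((‖z‖ : ℂ) ^ 2) ≠ 0 := pow_ne_zero _ hz'
  set w : H → H := fun v => v - ((inner ℂ z v : ℂ) / (‖z‖ : ℂ) ^ 2) • z with hw
  have key : ∀ u v : H, tinner u v z = ((‖z‖ : ℂ) ^ 2) * (inner ℂ (w u) (w v) : ℂ) := by
    intro u v
    simp only [hw, tinner, inner_sub_left, inner_sub_right, inner_smul_left, inner_smul_right,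
      inner_self_eq_norm_sq_to_K, map_div₀, inner_conj_symm, map_pow, Complex.conj_ofReal]
    field_simp
    simp only [RCLike.ofReal_eq_complex_ofReal]
    ring
  have habs : ∀ u v : H, ‖tinner u v z‖ = ‖z‖ ^ 2 * ‖(inner ℂ (w u) (w v) : ℂ)‖ := by
    intro u v
    rw [key, norm_mul]
    simp [abs_of_nonneg (norm_nonneg z)]
  have hre : ∀ u : H, (tinner u u z).re = ‖z‖ ^ 2 * ‖w u‖ ^ 2 := by
    intro u
    rw [key]
    rw [@inner_self_eq_norm_sq_to_K ℂ]
    simp [← Complex.ofReal_pow]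
  rw [habs, hre, hre, mul_pow]
  have := norm_inner_le_norm (𝕜 := ℂ) (w x) (w y)
  calc (‖z‖ ^ 2) ^ 2 * ‖(inner ℂ (w x) (w y) : ℂ)‖ ^ 2
      ≤ (‖z‖ ^ 2) ^ 2 * (‖w x‖ * ‖w y‖) ^ 2 := by
        gcongr
    _ = ‖z‖ ^ 2 * ‖w x‖ ^ 2 * (‖z‖ ^ 2 * ‖w y‖ ^ 2) := by ring
end

section
/- Bessel's inequality in 2-inner product spaces: let H be a complex inner product space with 2-inner product (x,y|z) := ⟪x,y⟫‖z‖² − ⟪x,z⟫⟪z,y⟫ and 2-norm ‖x|z‖ := √(x,x|z). If e₁, …, eₙ, z ∈ H satisfy (eᵢ,eⱼ|z) = δᵢⱼ for all i, j ∈ {1,…,n}, then for every x ∈ H, ∑_{i=1}^n |(x,eᵢ|z)|² ≤ ‖x|z‖². -/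
open scoped BigOperators

section aux
variable {H : Type*} [NormedAddCommGroup H] [InnerProductSpace ℂ H]

lemma tinner_conj_symm (x y z : H) :
    tinner y x z = starRingEnd ℂ (tinner x y z) := by
  simp only [tinner, map_sub, map_mul, map_pow, Complex.conj_ofReal, inner_conj_symm]
  ring

lemma tinner_self_nonneg (x z : H) : 0 ≤ (tinner x x z).re := by
  have h := norm_inner_le_norm (𝕜 := ℂ) x z
  have h2 : (inner ℂ z x : ℂ) = starRingEnd ℂ (inner ℂ x z) := by
    rw [← inner_conj_symm]
  have h3 : (inner ℂ x x : ℂ) = ((‖x‖ : ℂ)) ^ 2 := inner_self_eq_norm_sq_to_K x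
  have key : tinner x x z
      = ((‖x‖ ^ 2 * ‖z‖ ^ 2 - Complex.normSq (inner ℂ x z) : ℝ) : ℂ) := by
    rw [tinner, h3, h2, Complex.mul_conj]
    push_cast
    ring
  rw [key, Complex.ofReal_re]
  have hns : Complex.normSq (inner ℂ x z) = ‖(inner ℂ x z : ℂ)‖ ^ 2 := by
    rw [Complex.sq_norm]
  rw [hns]
  nlinarith [norm_nonneg (inner ℂ x z : ℂ), norm_nonneg x, norm_nonneg z]

lemma tinner_sub_left (x y w z : H) :
    tinner (x - y) w z = tinner x w z - tinner y w z := by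
  simp [tinner, inner_sub_left, inner_sub_right]; ring

lemma tinner_sub_right (x y w z : H) :
    tinner w (x - y) z = tinner w x z - tinner w y z := by
  simp [tinner, inner_sub_left, inner_sub_right]; ring

lemma tinner_sum_right {ι : Type*} (s : Finset ι) (f : ι → H) (w z : H) :
    tinner w (∑ i ∈ s, f i) z = ∑ i ∈ s, tinner w (f i) z := by
  simp [tinner, inner_sum, Finset.sum_mul, Finset.mul_sum, Finset.sum_sub_distrib]

lemma tinner_sum_left {ι : Type*} (s : Finset ι) (f : ι → H) (w z : H) :
    tinner (∑ i ∈ s, f i) w z = ∑ i ∈ s, tinner (f i) w z := by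
  simp [tinner, sum_inner, Finset.sum_mul, Finset.mul_sum, Finset.sum_sub_distrib]

lemma tinner_smul_right (c : ℂ) (x w z : H) :
    tinner w (c • x) z = c * tinner w x z := by
  simp [tinner, inner_smul_right]; ring

lemma tinner_smul_left (c : ℂ) (x w z : H) :
    tinner (c • x) w z = starRingEnd ℂ c * tinner x w z := by
  simp [tinner, inner_smul_left]; ring

end aux

theorem bessel_two_inner {H : Type*} [NormedAddCommGroup H] [InnerProductSpace ℂ H]
    (n : ℕ) (e : Fin n → H) (z : H)
    (horth : ∀ i j, tinner (e i) (e j) z = if i = j then 1 else 0) (x : H) :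
    ∑ i, ‖tinner x (e i) z‖ ^ 2 ≤ tnorm x z ^ 2 := by
  classical
  set c : Fin n → ℂ := fun i => tinner (e i) x z with hc
  set s : H := ∑ i, c i • e i with hs
  have hconj : ∀ i, tinner x (e i) z = starRingEnd ℂ (c i) := fun i =>
    tinner_conj_symm (e i) x z
  have h1 : tinner x s z = ∑ i, (Complex.normSq (c i) : ℂ) := by
    rw [hs, tinner_sum_right]
    refine Finset.sum_congr rfl fun i _ => ?_
    rw [tinner_smul_right, hconj, Complex.mul_conj]
  have h2 : tinner s x z = ∑ i, (Complex.normSq (c i) : ℂ) := by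
    rw [hs, tinner_sum_left]
    refine Finset.sum_congr rfl fun i _ => ?_
    rw [tinner_smul_left, ← Complex.normSq_eq_conj_mul_self]
  have h3 : tinner s s z = ∑ i, (Complex.normSq (c i) : ℂ) := by
    rw [hs, tinner_sum_left]
    have : ∀ i, tinner (c i • e i) s z = (Complex.normSq (c i) : ℂ) := by
      intro i
      rw [tinner_smul_left, hs, tinner_sum_right]
      have : ∀ j, tinner (e i) (c j • e j) z = if i = j then c i else 0 := by
        intro j
        rw [tinner_smul_right, horth]
        by_cases h : i = j <;> simp [h]
      simp only [this, Finset.sum_ite_eq, Finset.mem_univ, if_true]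
      rw [← Complex.normSq_eq_conj_mul_self]
    exact Finset.sum_congr rfl fun i _ => this i
  have hexp : (tinner (x - s) (x - s) z).re
      = (tinner x x z).re - ∑ i, Complex.normSq (c i) := by
    rw [tinner_sub_left, tinner_sub_right, tinner_sub_right, h1, h2, h3]
    simp [Complex.re_sum]
  have hnn := tinner_self_nonneg (x - s) z
  rw [hexp] at hnn
  have habs : ∀ i, ‖tinner x (e i) z‖ ^ 2 = Complex.normSq (c i) := by
    intro i; rw [hconj]; simp [Complex.sq_norm]
  have htn : tnorm x z ^ 2 = (tinner x x z).re := by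
    rw [tnorm, Real.sq_sqrt (tinner_self_nonneg x z)]
  rw [htn]
  simp only [habs]
  linarith
end

section
/- If e₁, …, eₙ, z are vectors in a complex inner product space such that (eᵢ,eⱼ|z) = δᵢⱼ, where (u,v|z) := ⟪u,v⟫‖z‖² − ⟪u,z⟫⟪z,v⟫, then for every x, ∑_{i=1}^n |(x,eᵢ|z)|² ≤ √n · ‖x|z‖ · max_{1≤i≤n} |(x,eᵢ|z)|, where ‖x|z‖ := √(x,x|z). -/
open scoped BigOperators

/-- The map `T u = ‖z‖ • u − (⟪z,u⟫/‖z‖) • z` realizing `tinner` as an actual inner product. -/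
noncomputable def tmap {H : Type*} [NormedAddCommGroup H] [InnerProductSpace ℂ H]
    (z u : H) : H :=
  (‖z‖ : ℂ) • u - ((inner ℂ z u : ℂ) / (‖z‖ : ℂ)) • z

lemma tinner_eq_inner_tmap {H : Type*} [NormedAddCommGroup H] [InnerProductSpace ℂ H]
    (z : H) (hz : z ≠ 0) (u v : H) :
    tinner u v z = (inner ℂ (tmap z u) (tmap z v) : ℂ) := by
  have hz' : (‖z‖ : ℂ) ≠ 0 := by
    simpa using norm_ne_zero_iff.mpr hz
  simp only [tmap, tinner, inner_sub_left, inner_sub_right, inner_smul_left, inner_smul_right,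
    map_div₀, Complex.conj_ofReal, inner_conj_symm, RingHom.map_mul]
  rw [show (inner ℂ z z : ℂ) = ((‖z‖ : ℂ))^2 by
    rw [inner_self_eq_norm_sq_to_K]; norm_cast]
  field_simp
  ring

theorem bessel_max_two_inner {H : Type*} [NormedAddCommGroup H] [InnerProductSpace ℂ H]
    (n : ℕ) (hn : 0 < n) (e : Fin n → H) (z : H)
    (horth : ∀ i j, tinner (e i) (e j) z = if i = j then 1 else 0) (x : H) :
    ∑ i, ‖tinner x (e i) z‖ ^ 2 ≤
      Real.sqrt n * tnorm x z *
        (Finset.univ.sup' ⟨⟨0, hn⟩, Finset.mem_univ _⟩ fun i =>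
          ‖tinner x (e i) z‖) := by
  have hz : z ≠ 0 := by
    intro h
    have := horth ⟨0, hn⟩ ⟨0, hn⟩
    simp [tinner, h] at this
  -- orthonormality of `tmap z ∘ e`
  have honb : Orthonormal ℂ (fun i => tmap z (e i)) := by
    rw [orthonormal_iff_ite]
    intro i j
    rw [← tinner_eq_inner_tmap z hz]
    exact horth i j
  -- Bessel
  have hbessel : ∑ i, ‖tinner x (e i) z‖ ^ 2 ≤ ‖tmap z x‖ ^ 2 := by
    have := honb.sum_inner_products_le (s := Finset.univ) (tmap z x)
    refine le_trans (le_of_eq ?_) this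
    refine Finset.sum_congr rfl fun i _ => ?_
    rw [tinner_eq_inner_tmap z hz, norm_inner_symm]
  set M := Finset.univ.sup' ⟨⟨0, hn⟩, Finset.mem_univ _⟩ fun i =>
      ‖tinner x (e i) z‖ with hM
  have hM0 : 0 ≤ M := le_trans (norm_nonneg (tinner x (e ⟨0, hn⟩) z))
    (Finset.le_sup' (fun i => ‖tinner x (e i) z‖) (Finset.mem_univ (⟨0, hn⟩ : Fin n)))
  have htn : tnorm x z = ‖tmap z x‖ := by
    have h := inner_self_eq_norm_sq (𝕜 := ℂ) (tmap z x)
    rw [tnorm, tinner_eq_inner_tmap z hz]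
    rw [show ((inner ℂ (tmap z x) (tmap z x) : ℂ)).re = ‖tmap z x‖ ^ 2 from h]
    exact Real.sqrt_sq (norm_nonneg _)
  have hsum_le : ∑ i, ‖tinner x (e i) z‖ ^ 2 ≤ n * M ^ 2 := by
    calc ∑ i, ‖tinner x (e i) z‖ ^ 2
        ≤ ∑ _i : Fin n, M ^ 2 := by
          refine Finset.sum_le_sum fun i _ => ?_
          have : ‖tinner x (e i) z‖ ≤ M :=
            Finset.le_sup' (fun j => ‖tinner x (e j) z‖) (Finset.mem_univ i)
          exact pow_le_pow_left₀ (norm_nonneg _) this 2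
      _ = n * M ^ 2 := by simp [Finset.sum_const, mul_comm]
  set S := ∑ i, ‖tinner x (e i) z‖ ^ 2 with hS
  have hS0 : 0 ≤ S := Finset.sum_nonneg fun i _ => sq_nonneg _
  have hsq : S ^ 2 ≤ (Real.sqrt n * tnorm x z * M) ^ 2 := by
    have h1 : S * S ≤ (‖tmap z x‖ ^ 2) * (n * M ^ 2) :=
      mul_le_mul hbessel hsum_le hS0 (sq_nonneg _)
    calc S ^ 2 = S * S := sq S
      _ ≤ (‖tmap z x‖ ^ 2) * (n * M ^ 2) := h1
      _ = (Real.sqrt n * tnorm x z * M) ^ 2 := by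
          rw [htn]
          rw [mul_pow, mul_pow, Real.sq_sqrt (Nat.cast_nonneg n)]
          ring
  have hrhs0 : 0 ≤ Real.sqrt n * tnorm x z * M := by
    apply mul_nonneg (mul_nonneg (Real.sqrt_nonneg _) ?_) hM0
    exact Real.sqrt_nonneg _
  exact (pow_le_pow_iff_left₀ hS0 hrhs0 two_ne_zero).mp hsq
end

section
/- The classical Boas–Bellman inequality: if x, y₁, …, yₙ are elements of a complex inner product space H, then ∑_{i=1}^n |⟪x,yᵢ⟫|² ≤ ‖x‖² · [max_{1≤i≤n} ‖yᵢ‖² + (∑_{1≤i≠j≤n} |⟪yᵢ,yⱼ⟫|²)^{1/2}]. -/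
open Finset Complex

theorem boas_bellman {H : Type*} [NormedAddCommGroup H] [InnerProductSpace ℂ H]
    (n : ℕ) (hn : 0 < n) (x : H) (y : Fin n → H) :
    ∑ i, ‖(inner ℂ x (y i) : ℂ)‖ ^ 2 ≤
      ‖x‖ ^ 2 *
        ((Finset.univ.sup' ⟨⟨0, hn⟩, Finset.mem_univ _⟩ fun i => ‖y i‖ ^ 2) +
          Real.sqrt (∑ i, ∑ j, if i ≠ j then ‖(inner ℂ (y i) (y j) : ℂ)‖ ^ 2 else 0)) := by
  set a : Fin n → ℂ := fun i => inner ℂ x (y i) with ha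
  set z : H := ∑ i, (starRingEnd ℂ (a i)) • y i with hz
  set S : ℝ := ∑ i, ‖a i‖ ^ 2 with hS
  set M : ℝ := Finset.univ.sup' ⟨⟨0, hn⟩, Finset.mem_univ _⟩ fun i => ‖y i‖ ^ 2 with hM
  set T : ℝ := ∑ i, ∑ j, if i ≠ j then ‖(inner ℂ (y i) (y j) : ℂ)‖ ^ 2 else 0 with hT
  have hS0 : 0 ≤ S := Finset.sum_nonneg fun i _ => by positivity
  have hM0 : 0 ≤ M := le_trans (by positivity) (Finset.le_sup' (f := fun i => ‖y i‖ ^ 2)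
    (Finset.mem_univ (⟨0, hn⟩ : Fin n)))
  -- Step 1 : inner ℂ x z = S
  have h1 : (inner ℂ x z : ℂ) = (S : ℂ) := by
    rw [hz, inner_sum, hS]
    push_cast
    refine Finset.sum_congr rfl fun i _ => ?_
    rw [inner_smul_right]
    rw [show (inner ℂ x (y i) : ℂ) = a i from rfl, mul_comm, Complex.mul_conj,
      Complex.normSq_eq_norm_sq]
    push_cast; ring
  -- Step 2 : S ≤ ‖x‖ * ‖z‖
  have h2 : S ≤ ‖x‖ * ‖z‖ := by
    calc S = ‖(inner ℂ x z : ℂ)‖ := by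
          rw [h1, Complex.norm_real]; exact (Real.norm_of_nonneg hS0).symm
    _ ≤ ‖x‖ * ‖z‖ := norm_inner_le_norm x z
  -- the expansion of ‖z‖²
  have hinner : (inner ℂ z z : ℂ) = ∑ i, ∑ j, a i * starRingEnd ℂ (a j) * inner ℂ (y i) (y j) := by
    rw [hz, sum_inner]
    refine Finset.sum_congr rfl fun i _ => ?_
    rw [inner_sum]
    refine Finset.sum_congr rfl fun j _ => ?_
    rw [inner_smul_left, inner_smul_right, Complex.conj_conj]
    ring
  have hzz : ‖z‖ ^ 2 = ∑ i, ∑ j, (a i * starRingEnd ℂ (a j) * inner ℂ (y i) (y j)).re := by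
    rw [← inner_self_eq_norm_sq (𝕜 := ℂ) z, hinner, ← RCLike.re_eq_complex_re, map_sum]
    refine Finset.sum_congr rfl fun i _ => ?_
    rw [map_sum]
  -- split diagonal and off-diagonal
  have hsplit : ‖z‖ ^ 2 = (∑ i, ‖a i‖ ^ 2 * ‖y i‖ ^ 2)
      + ∑ i, ∑ j, (if i ≠ j then (a i * starRingEnd ℂ (a j) * inner ℂ (y i) (y j)).re else 0) := by
    rw [hzz, ← Finset.sum_add_distrib]
    refine Finset.sum_congr rfl fun i _ => ?_
    have : ∑ j, (a i * starRingEnd ℂ (a j) * inner ℂ (y i) (y j)).re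
        = ∑ j, ((if i = j then (a i * starRingEnd ℂ (a j) * inner ℂ (y i) (y j)).re else 0)
          + (if i ≠ j then (a i * starRingEnd ℂ (a j) * inner ℂ (y i) (y j)).re else 0)) := by
      refine Finset.sum_congr rfl fun j _ => ?_
      by_cases h : i = j <;> simp [h]
    rw [this, Finset.sum_add_distrib, Finset.sum_ite_eq]
    simp only [Finset.mem_univ, if_true]
    congr 1
    rw [inner_self_eq_norm_sq_to_K (𝕜 := ℂ), Complex.mul_conj, Complex.normSq_eq_norm_sq]
    simp [pow_two, Complex.mul_re, Complex.ofReal_re, Complex.ofReal_im]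
  -- diagonal bound
  have hdiag : (∑ i, ‖a i‖ ^ 2 * ‖y i‖ ^ 2) ≤ S * M := by
    rw [hS, Finset.sum_mul]
    refine Finset.sum_le_sum fun i _ => ?_
    exact mul_le_mul_of_nonneg_left
      (Finset.le_sup' (f := fun i => ‖y i‖ ^ 2) (Finset.mem_univ i)) (by positivity)
  -- off-diagonal bound
  have hoff : (∑ i, ∑ j, (if i ≠ j then (a i * starRingEnd ℂ (a j) * inner ℂ (y i) (y j)).re else 0))
      ≤ S * Real.sqrt T := by
    have step1 : (∑ i, ∑ j, (if i ≠ j then (a i * starRingEnd ℂ (a j) * inner ℂ (y i) (y j)).re else 0))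
        ≤ ∑ i, ∑ j, (if i ≠ j then (‖a i‖ * ‖a j‖)
            * ‖(inner ℂ (y i) (y j) : ℂ)‖ else 0) := by
      refine Finset.sum_le_sum fun i _ => Finset.sum_le_sum fun j _ => ?_
      split
      · calc (a i * starRingEnd ℂ (a j) * inner ℂ (y i) (y j)).re
            ≤ ‖a i * starRingEnd ℂ (a j) * inner ℂ (y i) (y j)‖ := Complex.re_le_norm _
        _ = (‖a i‖ * ‖a j‖) * ‖(inner ℂ (y i) (y j) : ℂ)‖ := by
            rw [norm_mul, norm_mul, Complex.norm_conj]
      · exact le_refl _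
    refine step1.trans ?_
    -- Cauchy-Schwarz over pairs
    have step2 : (∑ i, ∑ j, (if i ≠ j then (‖a i‖ * ‖a j‖)
            * ‖(inner ℂ (y i) (y j) : ℂ)‖ else 0))
        ≤ Real.sqrt (∑ i, ∑ j, (if i ≠ j then (‖a i‖ * ‖a j‖) ^ 2 else 0))
          * Real.sqrt T := by
      have key := Real.sum_mul_le_sqrt_mul_sqrt (Finset.univ (α := Fin n × Fin n))
        (fun p => if p.1 ≠ p.2 then ‖a p.1‖ * ‖a p.2‖ else 0)
        (fun p => if p.1 ≠ p.2 then ‖(inner ℂ (y p.1) (y p.2) : ℂ)‖ else 0)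
      rw [hT]
      calc (∑ i, ∑ j, (if i ≠ j then (‖a i‖ * ‖a j‖)
            * ‖(inner ℂ (y i) (y j) : ℂ)‖ else 0))
          = ∑ p : Fin n × Fin n, (if p.1 ≠ p.2 then ‖a p.1‖ * ‖a p.2‖ else 0)
            * (if p.1 ≠ p.2 then ‖(inner ℂ (y p.1) (y p.2) : ℂ)‖ else 0) := by
            rw [Fintype.sum_prod_type]
            refine Finset.sum_congr rfl fun i _ => Finset.sum_congr rfl fun j _ => ?_
            by_cases h : i ≠ j <;> simp [h]
      _ ≤ _ := by
            refine key.trans ?_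
            apply le_of_eq
            congr 1
            · congr 1
              rw [Fintype.sum_prod_type]
              refine Finset.sum_congr rfl fun i _ => Finset.sum_congr rfl fun j _ => ?_
              by_cases h : i ≠ j <;> simp [h]
            · congr 1
              rw [Fintype.sum_prod_type]
              refine Finset.sum_congr rfl fun i _ => Finset.sum_congr rfl fun j _ => ?_
              by_cases h : i ≠ j <;> simp [h]
    refine step2.trans ?_
    have hfsq : (∑ i, ∑ j, (if i ≠ j then (‖a i‖ * ‖a j‖) ^ 2 else 0))
        ≤ S ^ 2 := by
      have : S ^ 2 = ∑ i, ∑ j, (‖a i‖ * ‖a j‖) ^ 2 := by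
        rw [hS, sq, Finset.sum_mul_sum]
        refine Finset.sum_congr rfl fun i _ => Finset.sum_congr rfl fun j _ => by ring
      rw [this]
      refine Finset.sum_le_sum fun i _ => Finset.sum_le_sum fun j _ => ?_
      split
      · exact le_refl _
      · positivity
    have := Real.sqrt_le_sqrt hfsq
    rw [Real.sqrt_sq hS0] at this
    exact mul_le_mul_of_nonneg_right this (Real.sqrt_nonneg T)
  -- Combine
  have h3 : ‖z‖ ^ 2 ≤ S * M + S * Real.sqrt T := by
    rw [hsplit]; exact add_le_add hdiag hoff
  rcases eq_or_lt_of_le hS0 with hSe | hSp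
  · rw [← hSe]; positivity
  · have h4 : S * S ≤ S * (‖x‖ ^ 2 * (M + Real.sqrt T)) := by
      nlinarith [norm_nonneg x, norm_nonneg z, sq_nonneg ‖x‖]
    exact le_of_mul_le_mul_left h4 hSp
end

section
/- Let (Ω, Σ, μ) be a measure space, ρ : Ω → [0,∞) measurable, and f, g, h real-valued functions with ρ^{1/2}f, ρ^{1/2}g, ρ^{1/2}h ∈ L²(μ). Then (1/2)∫∫ ρ(s)ρ(t) · det[[f(s), f(t)],[h(s), h(t)]] · det[[g(s), g(t)],[h(s), h(t)]] dμ(s)dμ(t) = det[[∫ρfg dμ, ∫ρfh dμ],[∫ρgh dμ, ∫ρh² dμ]]. -/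
open MeasureTheory

lemma l2_mul_integrable {α : Type*} [MeasurableSpace α] {μ : Measure α} {a b : α → ℝ}
    (ha : MemLp a 2 μ) (hb : MemLp b 2 μ) :
    Integrable (fun x => a x * b x) μ := by
  have h1 := (ha.add hb).integrable_sq
  have h2 := ha.integrable_sq
  have h3 := hb.integrable_sq
  have h4 : Integrable (fun x => ((a + b) x ^ 2 - a x ^ 2 - b x ^ 2) * (1 / 2 : ℝ)) μ :=
    ((h1.sub h2).sub h3).mul_const _
  convert h4 using 1
  funext x
  simp only [Pi.add_apply]
  ring

theorem two_inner_det_repr {Ω : Type*} [MeasurableSpace Ω] (μ : Measure Ω)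
    [SigmaFinite μ] (ρ f g h : Ω → ℝ) (hρ : Measurable ρ) (hρ0 : ∀ s, 0 ≤ ρ s)
    (hf : Measurable f) (hg : Measurable g) (hh : Measurable h)
    (hf2 : MemLp (fun s => Real.sqrt (ρ s) * f s) 2 μ)
    (hg2 : MemLp (fun s => Real.sqrt (ρ s) * g s) 2 μ)
    (hh2 : MemLp (fun s => Real.sqrt (ρ s) * h s) 2 μ) :
    (1 / 2) * ∫ s, ∫ t, ρ s * ρ t *
        ((f s * h t - f t * h s) * (g s * h t - g t * h s)) ∂μ ∂μ =
      (∫ s, ρ s * (f s * g s) ∂μ) * (∫ s, ρ s * (h s) ^ 2 ∂μ) -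
        (∫ s, ρ s * (f s * h s) ∂μ) * (∫ s, ρ s * (g s * h s) ∂μ) := by
  have key : ∀ (a b : Ω → ℝ), MemLp (fun s => Real.sqrt (ρ s) * a s) 2 μ →
      MemLp (fun s => Real.sqrt (ρ s) * b s) 2 μ →
      Integrable (fun s => ρ s * (a s * b s)) μ := by
    intro a b ha hb
    have H := l2_mul_integrable ha hb
    convert H using 1
    funext x
    have hx : Real.sqrt (ρ x) * Real.sqrt (ρ x) = ρ x := Real.mul_self_sqrt (hρ0 x)
    conv_lhs => rw [← hx]
    ring
  have Hfg := key f g hf2 hg2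
  have Hfh := key f h hf2 hh2
  have Hgh := key g h hg2 hh2
  have Hhh : Integrable (fun s => ρ s * (h s) ^ 2) μ := by
    have := key h h hh2 hh2
    convert this using 1; funext x; ring
  set Ifg := ∫ s, ρ s * (f s * g s) ∂μ with hIfg
  set Ifh := ∫ s, ρ s * (f s * h s) ∂μ with hIfh
  set Igh := ∫ s, ρ s * (g s * h s) ∂μ with hIgh
  set Ihh := ∫ s, ρ s * (h s) ^ 2 ∂μ with hIhh
  have inner_eq : ∀ s, (∫ t, ρ s * ρ t *
      ((f s * h t - f t * h s) * (g s * h t - g t * h s)) ∂μ)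
      = ρ s * ((f s * g s) * Ihh - (f s * h s) * Igh - (g s * h s) * Ifh
          + (h s * h s) * Ifg) := by
    intro s
    have hrw : (fun t => ρ s * ρ t *
        ((f s * h t - f t * h s) * (g s * h t - g t * h s)))
        = fun t => ρ s * ((f s * g s) * (ρ t * (h t) ^ 2)
            - (f s * h s) * (ρ t * (g t * h t))
            - (g s * h s) * (ρ t * (f t * h t))
            + (h s * h s) * (ρ t * (f t * g t))) := by
      funext t; ring
    have A1 : Integrable (fun t => (f s * g s) * (ρ t * (h t) ^ 2)
        - (f s * h s) * (ρ t * (g t * h t))) μ :=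
      (Hhh.const_mul _).sub (Hgh.const_mul _)
    have A2 : Integrable (fun t => (f s * g s) * (ρ t * (h t) ^ 2)
        - (f s * h s) * (ρ t * (g t * h t))
        - (g s * h s) * (ρ t * (f t * h t))) μ := A1.sub (Hfh.const_mul _)
    rw [hrw, integral_const_mul, integral_add A2 (Hfg.const_mul _),
      integral_sub A1 (Hfh.const_mul _),
      integral_sub (Hhh.const_mul _) (Hgh.const_mul _),
      integral_const_mul, integral_const_mul, integral_const_mul, integral_const_mul]
  have outer_rw : (fun s => ∫ t, ρ s * ρ t *
      ((f s * h t - f t * h s) * (g s * h t - g t * h s)) ∂μ)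
      = fun s => (ρ s * (f s * g s)) * Ihh - (ρ s * (f s * h s)) * Igh
          - (ρ s * (g s * h s)) * Ifh + (ρ s * (h s) ^ 2) * Ifg := by
    funext s; rw [inner_eq s]; ring
  have B1 : Integrable (fun s => (ρ s * (f s * g s)) * Ihh
      - (ρ s * (f s * h s)) * Igh) μ := (Hfg.mul_const _).sub (Hfh.mul_const _)
  have B2 : Integrable (fun s => (ρ s * (f s * g s)) * Ihh
      - (ρ s * (f s * h s)) * Igh - (ρ s * (g s * h s)) * Ifh) μ :=
    B1.sub (Hgh.mul_const _)
  rw [outer_rw, integral_add B2 (Hhh.mul_const _),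
    integral_sub B1 (Hgh.mul_const _),
    integral_sub (Hfg.mul_const _) (Hfh.mul_const _),
    integral_mul_const, integral_mul_const, integral_mul_const, integral_mul_const]
  ring
end

section
/- Determinantal Boas–Bellman inequality: let (Ω, Σ, μ) be a measure space, ρ : Ω → [0,∞) measurable, and f, g₁, …, gₙ, h real-valued with ρ^{1/2}f, ρ^{1/2}gᵢ, ρ^{1/2}h ∈ L²(μ). Writing D(u,v) := det[[∫ρuv dμ, ∫ρuh dμ],[∫ρvh dμ, ∫ρh² dμ]], one has ∑_{i=1}^n D(f,gᵢ)² ≤ D(f,f) · [max_{1≤i≤n} D(gᵢ,gᵢ) + (∑_{1≤i≠j≤n} D(gⱼ,gᵢ)²)^{1/2}]. -/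
open MeasureTheory Finset
open scoped RealInnerProductSpace

/-- The determinant `D(u,v) = (∫ρuv)(∫ρh²) − (∫ρuh)(∫ρvh)`. -/
noncomputable def Ddet {Ω : Type*} [MeasurableSpace Ω] (μ : Measure Ω)
    (ρ h u v : Ω → ℝ) : ℝ :=
  (∫ s, ρ s * (u s * v s) ∂μ) * (∫ s, ρ s * (h s) ^ 2 ∂μ) -
    (∫ s, ρ s * (u s * h s) ∂μ) * (∫ s, ρ s * (v s * h s) ∂μ)

lemma bb_abstract {E : Type*} [NormedAddCommGroup E] [InnerProductSpace ℝ E]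
    {n : ℕ} (hn : 0 < n) (x : E) (y : Fin n → E) :
    ∑ i, ⟪x, y i⟫ ^ 2 ≤ ‖x‖ ^ 2 *
      ((Finset.univ.sup' ⟨⟨0, hn⟩, Finset.mem_univ _⟩ fun i => ‖y i‖ ^ 2) +
        Real.sqrt (∑ i, ∑ j, if i ≠ j then ⟪y j, y i⟫ ^ 2 else 0)) := by
  classical
  set c : Fin n → ℝ := fun i => ⟪x, y i⟫ with hc
  set S : ℝ := ∑ i, c i ^ 2 with hS
  have hne : (Finset.univ : Finset (Fin n)).Nonempty := ⟨⟨0, hn⟩, Finset.mem_univ _⟩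
  set M : ℝ := Finset.univ.sup' hne (fun i => ‖y i‖ ^ 2) with hM
  set R : ℝ := Real.sqrt (∑ i, ∑ j, if i ≠ j then ⟪y j, y i⟫ ^ 2 else 0) with hR
  have hS0 : 0 ≤ S := Finset.sum_nonneg fun i _ => sq_nonneg _
  have hM0 : 0 ≤ M :=
    le_trans (sq_nonneg ‖y ⟨0, hn⟩‖) (Finset.le_sup' (fun i => ‖y i‖ ^ 2) (Finset.mem_univ (⟨0, hn⟩ : Fin n)))
  have hR0 : 0 ≤ R := Real.sqrt_nonneg _
  set z : E := ∑ i, c i • y i with hz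
  have h1 : ⟪x, z⟫ = S := by
    rw [hz, inner_sum]
    simp only [real_inner_smul_right, hS, sq]
    rfl
  have h2 : ‖z‖ ^ 2 = ∑ i, ∑ j, c i * c j * ⟪y i, y j⟫ := by
    rw [← real_inner_self_eq_norm_sq, hz, sum_inner]
    refine Finset.sum_congr rfl fun i _ => ?_
    rw [real_inner_smul_left, inner_sum, Finset.mul_sum]
    refine Finset.sum_congr rfl fun j _ => ?_
    rw [real_inner_smul_right]; ring
  -- split double sum
  have hsplit : ∑ i, ∑ j, c i * c j * ⟪y i, y j⟫ =
      (∑ i, c i ^ 2 * ‖y i‖ ^ 2) +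
        ∑ i, ∑ j, if i ≠ j then c i * c j * ⟪y i, y j⟫ else 0 := by
    rw [← Finset.sum_add_distrib]
    refine Finset.sum_congr rfl fun i _ => ?_
    have : ∀ j, c i * c j * ⟪y i, y j⟫ =
        (if i = j then c i * c j * ⟪y i, y j⟫ else 0) +
        (if i ≠ j then c i * c j * ⟪y i, y j⟫ else 0) := by
      intro j; by_cases hij : i = j <;> simp [hij]
    rw [Finset.sum_congr rfl fun j _ => this j, Finset.sum_add_distrib,
      Finset.sum_ite_eq Finset.univ i fun j => c i * c j * ⟪y i, y j⟫]
    simp [real_inner_self_eq_norm_sq, sq]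
  have hdiag : ∑ i, c i ^ 2 * ‖y i‖ ^ 2 ≤ S * M := by
    calc ∑ i, c i ^ 2 * ‖y i‖ ^ 2 ≤ ∑ i, c i ^ 2 * M :=
          Finset.sum_le_sum fun i _ =>
            mul_le_mul_of_nonneg_left (Finset.le_sup' (fun i => ‖y i‖ ^ 2) (Finset.mem_univ i)) (sq_nonneg _)
      _ = S * M := by rw [← Finset.sum_mul]
  have hoff : ∑ i, ∑ j, (if i ≠ j then c i * c j * ⟪y i, y j⟫ else 0) ≤ S * R := by
    have cs := Finset.sum_mul_sq_le_sq_mul_sq Finset.univ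
      (fun p : Fin n × Fin n => if p.1 ≠ p.2 then c p.1 * c p.2 else 0)
      (fun p : Fin n × Fin n => if p.1 ≠ p.2 then ⟪y p.1, y p.2⟫ else 0)
    -- rewrite products of ites
    have e1 : ∑ p : Fin n × Fin n,
        (if p.1 ≠ p.2 then c p.1 * c p.2 else 0) * (if p.1 ≠ p.2 then ⟪y p.1, y p.2⟫ else 0)
        = ∑ i, ∑ j, (if i ≠ j then c i * c j * ⟪y i, y j⟫ else 0) := by
      rw [← Finset.sum_product']
      refine Finset.sum_congr rfl fun p _ => ?_
      by_cases hp : p.1 ≠ p.2 <;> simp [hp]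
    have e2 : ∑ p : Fin n × Fin n, (if p.1 ≠ p.2 then c p.1 * c p.2 else 0) ^ 2 ≤ S ^ 2 := by
      have : ∀ p : Fin n × Fin n,
          (if p.1 ≠ p.2 then c p.1 * c p.2 else 0) ^ 2 ≤ (c p.1 * c p.2) ^ 2 := by
        intro p; by_cases hp : p.1 ≠ p.2 <;> simp [hp, sq_nonneg]
      calc ∑ p : Fin n × Fin n, (if p.1 ≠ p.2 then c p.1 * c p.2 else 0) ^ 2
          ≤ ∑ p : Fin n × Fin n, (c p.1 * c p.2) ^ 2 :=
            Finset.sum_le_sum fun p _ => this p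
        _ = S ^ 2 := by
            rw [show (Finset.univ : Finset (Fin n × Fin n)) = Finset.univ ×ˢ Finset.univ from
              Finset.univ_product_univ.symm, Finset.sum_product, sq S, hS, Finset.sum_mul_sum]
            exact Finset.sum_congr rfl fun i _ => Finset.sum_congr rfl fun j _ => mul_pow _ _ _
    have e3 : ∑ p : Fin n × Fin n, (if p.1 ≠ p.2 then ⟪y p.1, y p.2⟫ else 0) ^ 2
        = ∑ i, ∑ j, if i ≠ j then ⟪y j, y i⟫ ^ 2 else 0 := by
      rw [← Finset.sum_product']
      refine Finset.sum_congr rfl fun p _ => ?_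
      by_cases hp : p.1 ≠ p.2 <;> simp [hp, real_inner_comm]
    rw [e1] at cs
    -- cs : (∑∑ ite ...)^2 ≤ (∑ f^2) * (∑ g^2)
    have hb : (∑ i, ∑ j, (if i ≠ j then c i * c j * ⟪y i, y j⟫ else 0)) ^ 2
        ≤ S ^ 2 * (∑ i, ∑ j, if i ≠ j then ⟪y j, y i⟫ ^ 2 else 0) := by
      refine le_trans cs ?_
      rw [e3]
      exact mul_le_mul_of_nonneg_right e2 (by
        rw [← e3]; exact Finset.sum_nonneg fun p _ => sq_nonneg _)
    have hsum0 : 0 ≤ ∑ i, ∑ j, (if i ≠ j then ⟪y j, y i⟫ ^ 2 else 0) :=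
      Finset.sum_nonneg fun i _ => Finset.sum_nonneg fun j _ => by positivity
    calc ∑ i, ∑ j, (if i ≠ j then c i * c j * ⟪y i, y j⟫ else 0)
        ≤ |∑ i, ∑ j, (if i ≠ j then c i * c j * ⟪y i, y j⟫ else 0)| := le_abs_self _
      _ = Real.sqrt ((∑ i, ∑ j, (if i ≠ j then c i * c j * ⟪y i, y j⟫ else 0)) ^ 2) :=
          (Real.sqrt_sq_eq_abs _).symm
      _ ≤ Real.sqrt (S ^ 2 * ∑ i, ∑ j, if i ≠ j then ⟪y j, y i⟫ ^ 2 else 0) :=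
          Real.sqrt_le_sqrt hb
      _ = S * R := by
          rw [Real.sqrt_mul (sq_nonneg S), Real.sqrt_sq hS0, hR]
  suffices hfin : S ≤ ‖x‖ ^ 2 * (M + R) by exact hfin
  have hz2 : ‖z‖ ^ 2 ≤ S * (M + R) := by
    rw [h2, hsplit, mul_add]
    exact add_le_add hdiag hoff
  have hxz : S ≤ ‖x‖ * ‖z‖ := h1 ▸ real_inner_le_norm x z
  have hkey : S * S ≤ ‖x‖ ^ 2 * (S * (M + R)) := by
    nlinarith [norm_nonneg x, norm_nonneg z, sq_nonneg (‖x‖ * ‖z‖)]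
  rcases hS0.eq_or_lt with h0 | hpos
  · rw [← h0]
    have : (0:ℝ) ≤ ‖x‖ ^ 2 * (M + R) := mul_nonneg (sq_nonneg _) (add_nonneg hM0 hR0)
    linarith
  · nlinarith [hkey, hpos]

lemma inner_toLp_eq {Ω : Type*} [MeasurableSpace Ω] {μ : Measure Ω} {ρ u v : Ω → ℝ}
    (hρ0 : ∀ s, 0 ≤ ρ s)
    (hu : MemLp (fun s => Real.sqrt (ρ s) * u s) 2 μ)
    (hv : MemLp (fun s => Real.sqrt (ρ s) * v s) 2 μ) :
    ⟪hu.toLp _, hv.toLp _⟫ = ∫ s, ρ s * (u s * v s) ∂μ := by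
  rw [MeasureTheory.L2.inner_def]
  refine integral_congr_ae ?_
  filter_upwards [hu.coeFn_toLp, hv.coeFn_toLp] with s h1 h2
  rw [h1, h2]
  simp only [RCLike.inner_apply, starRingEnd_apply, star_trivial]
  linear_combination (u s * v s) * Real.mul_self_sqrt (hρ0 s)

lemma Ddet_eq_inner {Ω : Type*} [MeasurableSpace Ω] {μ : Measure Ω} {ρ h : Ω → ℝ}
    (hρ0 : ∀ s, 0 ≤ ρ s) {u v : Ω → ℝ}
    (hu : MemLp (fun s => Real.sqrt (ρ s) * u s) 2 μ)
    (hv : MemLp (fun s => Real.sqrt (ρ s) * v s) 2 μ)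
    (hh2 : MemLp (fun s => Real.sqrt (ρ s) * h s) 2 μ) :
    Ddet μ ρ h u v = ⟪hu.toLp _, hv.toLp _⟫ * ⟪hh2.toLp _, hh2.toLp _⟫ -
      ⟪hu.toLp _, hh2.toLp _⟫ * ⟪hv.toLp _, hh2.toLp _⟫ := by
  have hhh : (∫ s, ρ s * (h s) ^ 2 ∂μ) = ∫ s, ρ s * (h s * h s) ∂μ :=
    integral_congr_ae (Filter.Eventually.of_forall fun s => by simp [sq])
  rw [Ddet, hhh, inner_toLp_eq hρ0 hu hv, inner_toLp_eq hρ0 hu hh2, inner_toLp_eq hρ0 hv hh2,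
    inner_toLp_eq hρ0 hh2 hh2]

lemma bb_det {E : Type*} [NormedAddCommGroup E] [InnerProductSpace ℝ E]
    {n : ℕ} (hn : 0 < n) (F H : E) (G : Fin n → E) :
    ∑ i, (⟪F, G i⟫ * ⟪H, H⟫ - ⟪F, H⟫ * ⟪G i, H⟫) ^ 2 ≤
      (⟪F, F⟫ * ⟪H, H⟫ - ⟪F, H⟫ * ⟪F, H⟫) *
        ((Finset.univ.sup' ⟨⟨0, hn⟩, Finset.mem_univ _⟩ fun i =>
            ⟪G i, G i⟫ * ⟪H, H⟫ - ⟪G i, H⟫ * ⟪G i, H⟫) +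
          Real.sqrt (∑ i, ∑ j, if i ≠ j then
            (⟪G j, G i⟫ * ⟪H, H⟫ - ⟪G j, H⟫ * ⟪G i, H⟫) ^ 2 else 0)) := by
  classical
  have hne : (Finset.univ : Finset (Fin n)).Nonempty := ⟨⟨0, hn⟩, Finset.mem_univ _⟩
  have hT0 : (0:ℝ) ≤ ⟪H, H⟫ := real_inner_self_nonneg
  rcases hT0.eq_or_lt with h0 | hpos
  · have hH0 : H = 0 := (@inner_self_eq_zero ℝ _ _ _ _ H).mp h0.symm
    simp [hH0]
  · set T : ℝ := ⟪H, H⟫ with hT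
    set x : E := T • F - ⟪F, H⟫ • H with hx
    set y : Fin n → E := fun i => T • G i - ⟪G i, H⟫ • H with hy
    have hPP : ∀ U V : E, ⟪T • U - ⟪U, H⟫ • H, T • V - ⟪V, H⟫ • H⟫ =
        T * (⟪U, V⟫ * T - ⟪U, H⟫ * ⟪V, H⟫) := by
      intro U V
      simp only [inner_sub_left, inner_sub_right, real_inner_smul_left, real_inner_smul_right]
      rw [real_inner_comm H V, real_inner_comm H U, ← hT]
      ring
    have bb := bb_abstract hn x y
    have L : ∑ i, ⟪x, y i⟫ ^ 2 =
        T ^ 2 * ∑ i, (⟪F, G i⟫ * T - ⟪F, H⟫ * ⟪G i, H⟫) ^ 2 := by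
      rw [Finset.mul_sum]
      exact Finset.sum_congr rfl fun i _ => by rw [hx, hy, hPP F (G i)]; ring
    have hxx : ‖x‖ ^ 2 = T * (⟪F, F⟫ * T - ⟪F, H⟫ * ⟪F, H⟫) := by
      rw [← real_inner_self_eq_norm_sq, hx]; exact hPP F F
    have hyy : ∀ i, ‖y i‖ ^ 2 = T * (⟪G i, G i⟫ * T - ⟪G i, H⟫ * ⟪G i, H⟫) := by
      intro i; rw [← real_inner_self_eq_norm_sq, hy]; exact hPP (G i) (G i)
    have Msup : (Finset.univ.sup' ⟨⟨0, hn⟩, Finset.mem_univ _⟩ fun i => ‖y i‖ ^ 2) =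
        T * Finset.univ.sup' ⟨⟨0, hn⟩, Finset.mem_univ _⟩
          (fun i => ⟪G i, G i⟫ * T - ⟪G i, H⟫ * ⟪G i, H⟫) := by
      rw [show (fun i => ‖y i‖ ^ 2) =
        fun i => T * (⟪G i, G i⟫ * T - ⟪G i, H⟫ * ⟪G i, H⟫) from funext hyy]
      exact (Finset.comp_sup'_eq_sup'_comp hne (fun a => T * a)
        fun a b => mul_max_of_nonneg a b hpos.le).symm
    have Rq : Real.sqrt (∑ i, ∑ j, if i ≠ j then ⟪y j, y i⟫ ^ 2 else 0) =
        T * Real.sqrt (∑ i, ∑ j, if i ≠ j then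
          (⟪G j, G i⟫ * T - ⟪G j, H⟫ * ⟪G i, H⟫) ^ 2 else 0) := by
      have e : (∑ i, ∑ j, if i ≠ j then ⟪y j, y i⟫ ^ 2 else 0) =
          T ^ 2 * ∑ i, ∑ j, if i ≠ j then
            (⟪G j, G i⟫ * T - ⟪G j, H⟫ * ⟪G i, H⟫) ^ 2 else 0 := by
        rw [Finset.mul_sum]
        refine Finset.sum_congr rfl fun i _ => ?_
        rw [Finset.mul_sum]
        refine Finset.sum_congr rfl fun j _ => ?_
        by_cases hij : i ≠ j
        · rw [if_pos hij, if_pos hij, hy, hPP (G j) (G i)]; ring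
        · rw [if_neg hij, if_neg hij, mul_zero]
      rw [e, Real.sqrt_mul (sq_nonneg T), Real.sqrt_sq hpos.le]
    rw [L, hxx, Msup, Rq] at bb
    have bb' : T ^ 2 * ∑ i, (⟪F, G i⟫ * T - ⟪F, H⟫ * ⟪G i, H⟫) ^ 2 ≤
        T ^ 2 * ((⟪F, F⟫ * T - ⟪F, H⟫ * ⟪F, H⟫) *
          ((Finset.univ.sup' ⟨⟨0, hn⟩, Finset.mem_univ _⟩ fun i =>
              ⟪G i, G i⟫ * T - ⟪G i, H⟫ * ⟪G i, H⟫) +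
            Real.sqrt (∑ i, ∑ j, if i ≠ j then
              (⟪G j, G i⟫ * T - ⟪G j, H⟫ * ⟪G i, H⟫) ^ 2 else 0))) := by
      refine le_trans bb (le_of_eq ?_)
      ring
    exact le_of_mul_le_mul_left bb' (pow_pos hpos 2)

theorem det_boas_bellman {Ω : Type*} [MeasurableSpace Ω] (μ : Measure Ω)
    (n : ℕ) (hn : 0 < n) (ρ f h : Ω → ℝ) (g : Fin n → Ω → ℝ)
    (hρ : Measurable ρ) (hρ0 : ∀ s, 0 ≤ ρ s)
    (hf : Measurable f) (hg : ∀ i, Measurable (g i)) (hh : Measurable h)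
    (hf2 : MemLp (fun s => Real.sqrt (ρ s) * f s) 2 μ)
    (hg2 : ∀ i, MemLp (fun s => Real.sqrt (ρ s) * g i s) 2 μ)
    (hh2 : MemLp (fun s => Real.sqrt (ρ s) * h s) 2 μ) :
    ∑ i, Ddet μ ρ h f (g i) ^ 2 ≤
      Ddet μ ρ h f f *
        ((Finset.univ.sup' ⟨⟨0, hn⟩, Finset.mem_univ _⟩ fun i => Ddet μ ρ h (g i) (g i)) +
          Real.sqrt (∑ i, ∑ j, if i ≠ j then Ddet μ ρ h (g j) (g i) ^ 2 else 0)) := by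
  have e1 : ∀ i, Ddet μ ρ h f (g i) = _ := fun i => Ddet_eq_inner hρ0 hf2 (hg2 i) hh2
  have e2 : Ddet μ ρ h f f = _ := Ddet_eq_inner hρ0 hf2 hf2 hh2
  have e3 : ∀ i, Ddet μ ρ h (g i) (g i) = _ := fun i => Ddet_eq_inner hρ0 (hg2 i) (hg2 i) hh2
  have e4 : ∀ i j, Ddet μ ρ h (g j) (g i) = _ :=
    fun i j => Ddet_eq_inner hρ0 (hg2 j) (hg2 i) hh2
  simp only [e1, e2, e3, e4]
  exact bb_det hn (hf2.toLp _) (hh2.toLp _) (fun i => (hg2 i).toLp _)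
end

section
/- The two Boas–Bellman-type bounds are incomparable: there exist vectors y₁, y₂, y₃, z in a real inner product space such that, with (u,v|z) := ⟪u,v⟫‖z‖² − ⟪u,z⟫⟪z,v⟫, the quantity A := (∑_{1≤i≠j≤3} |(yᵢ,yⱼ|z)|²)^{1/2} satisfies A > B where B := 2·max_{1≤i≠j≤3} |(yᵢ,yⱼ|z)|; and there also exist vectors for which B > A. -/
/-- The standard 2-inner product on a real inner product space. -/
noncomputable def tinnerR {H : Type*} [NormedAddCommGroup H] [InnerProductSpace ℝ H]
    (x y z : H) : ℝ :=
  (inner ℝ x y : ℝ) * ‖z‖ ^ 2 - (inner ℝ x z : ℝ) * (inner ℝ z y : ℝ)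

noncomputable def vv (a b c : ℝ) : EuclideanSpace ℝ (Fin 3) := (WithLp.equiv 2 _).symm ![a,b,c]

lemma tv (a b c d e f : ℝ) :
    tinnerR (vv a b c) (vv d e f) (vv 0 0 1) = a * d + b * e := by
  simp [tinnerR, vv, EuclideanSpace.norm_eq, PiLp.inner_apply, Fin.sum_univ_three]
  ring

theorem bounds_incomparable :
    (∃ (y : Fin 3 → EuclideanSpace ℝ (Fin 3)) (z : EuclideanSpace ℝ (Fin 3)),
      Real.sqrt (∑ i, ∑ j, if i ≠ j then |tinnerR (y i) (y j) z| ^ 2 else 0) >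
        2 * ((Finset.univ.filter fun p : Fin 3 × Fin 3 => p.1 ≠ p.2).sup'
          ⟨(0, 1), Finset.mem_filter.mpr ⟨Finset.mem_univ _, by decide⟩⟩
          fun p => |tinnerR (y p.1) (y p.2) z|)) ∧
    (∃ (y : Fin 3 → EuclideanSpace ℝ (Fin 3)) (z : EuclideanSpace ℝ (Fin 3)),
      2 * ((Finset.univ.filter fun p : Fin 3 × Fin 3 => p.1 ≠ p.2).sup'
          ⟨(0, 1), Finset.mem_filter.mpr ⟨Finset.mem_univ _, by decide⟩⟩
          fun p => |tinnerR (y p.1) (y p.2) z|) >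
        Real.sqrt (∑ i, ∑ j, if i ≠ j then |tinnerR (y i) (y j) z| ^ 2 else 0)) := by
  constructor
  · refine ⟨![vv 1 0 0, vv 1 1 0, vv 1 0 0], vv 0 0 1, ?_⟩
    have hsum : (∑ i, ∑ j, if i ≠ j then
        |tinnerR (![vv 1 0 0, vv 1 1 0, vv 1 0 0] i) (![vv 1 0 0, vv 1 1 0, vv 1 0 0] j)
          (vv 0 0 1)| ^ 2 else 0) = 6 := by
      simp [Fin.sum_univ_three, tv]
      norm_num
    rw [hsum, gt_iff_lt, ← lt_div_iff₀' (by norm_num : (0:ℝ) < 2)]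
    refine (Finset.sup'_lt_iff (H := _)).mpr ?_
    intro p hp
    have h1 : (1:ℝ) < Real.sqrt 6 / 2 := by
      rw [lt_div_iff₀ (by norm_num : (0:ℝ) < 2)]
      nlinarith [Real.sq_sqrt (by norm_num : (6:ℝ) ≥ 0), Real.sqrt_nonneg 6]
    fin_cases p <;> simp_all [tv] <;> linarith
  · refine ⟨![vv 1 0 0, vv 1 0 0, vv 0 0 0], vv 0 0 1, ?_⟩
    have hsum : (∑ i, ∑ j, if i ≠ j then
        |tinnerR (![vv 1 0 0, vv 1 0 0, vv 0 0 0] i) (![vv 1 0 0, vv 1 0 0, vv 0 0 0] j)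
          (vv 0 0 1)| ^ 2 else 0) = 2 := by
      simp [Fin.sum_univ_three, tv]
      norm_num
    rw [hsum]
    have h1 : Real.sqrt 2 < 2 := by
      nlinarith [Real.sq_sqrt (by norm_num : (2:ℝ) ≥ 0), Real.sqrt_nonneg 2]
    have h2 : (1:ℝ) ≤ (Finset.univ.filter fun p : Fin 3 × Fin 3 => p.1 ≠ p.2).sup'
        ⟨(0, 1), Finset.mem_filter.mpr ⟨Finset.mem_univ _, by decide⟩⟩
        fun p => |tinnerR (![vv 1 0 0, vv 1 0 0, vv 0 0 0] p.1)
          (![vv 1 0 0, vv 1 0 0, vv 0 0 0] p.2) (vv 0 0 1)| := by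
      refine le_trans ?_ (Finset.le_sup' _ (Finset.mem_filter.mpr ⟨Finset.mem_univ ((0:Fin 3),(1:Fin 3)), by decide⟩))
      simp [tv]
    linarith
end
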